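/- Let p = 2n + 1 be an odd prime and let O ⊆ (Z/pZ)^n be the orbit of (1, 2, ..., n) under the hyperoctahedral group action (permuting coordinates and changing signs of coordinates). Then O − O = (Z/pZ)^n: every element of (Z/pZ)^n is the difference of two elements of O. -/
import Mathlib

open Finset

private -- sum of k-th powers over ZMod p
lemma sum_pow_zmod (p : ℕ) [Fact p.Prime] (k : ℕ) (hk1 : 1 ≤ k) (hk2 : k ≤ 2 * (p - 1) - 2) :
    ∑ x : ZMod p, x ^ k = if k = p - 1 then -1 else 0 := by
  have hp2 : 2 ≤ p := (Fact.out : p.Prime).two_le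
  have hq : Fintype.card (ZMod p) = p := ZMod.card p
  rcases lt_trichotomy k (p - 1) with h | h | h
  · rw [if_neg h.ne]
    have := FiniteField.sum_pow_lt_card_sub_one (ZMod p) k (by omega)
    exact this
  · subst h
    rw [if_pos rfl]
    classical
    have h0 : (0 : ZMod p) ^ (p - 1) = 0 := zero_pow (by omega)
    rw [← Finset.add_sum_erase _ _ (Finset.mem_univ (0 : ZMod p)), h0, zero_add]
    have : ∀ x ∈ Finset.univ.erase (0 : ZMod p), x ^ (p - 1) = 1 := by
      intro x hx
      exact ZMod.pow_card_sub_one_eq_one (Finset.mem_erase.mp hx).1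
    rw [Finset.sum_congr rfl this, Finset.sum_const, Finset.card_erase_of_mem (mem_univ _),
      Finset.card_univ, hq, nsmul_eq_mul, mul_one]
    rw [Nat.cast_sub (by omega), ZMod.natCast_self, Nat.cast_one, zero_sub]
  · rw [if_neg h.ne']
    have hk' : k - (p - 1) < p - 1 := by omega
    have hk'' : 1 ≤ k - (p - 1) := by omega
    have key : ∀ x : ZMod p, x ^ k = x ^ (k - (p - 1)) := by
      intro x
      rcases eq_or_ne x 0 with rfl | hx
      · rw [zero_pow (by omega), zero_pow (by omega)]
      · have : x ^ k = x ^ (k - (p - 1)) * x ^ (p - 1) := by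
          rw [← pow_add]; congr 1; omega
        rw [this, ZMod.pow_card_sub_one_eq_one hx, mul_one]
    simp_rw [key]
    have := FiniteField.sum_pow_lt_card_sub_one (ZMod p) (k - (p - 1)) (by omega)
    exact this

private lemma vdm {K : Type*} [CommRing K] {n : ℕ} (w : Fin n → K) :
    ∏ i : Fin n, ∏ j ∈ Ioi i, (w j - w i) =
      ∑ σ : Equiv.Perm (Fin n), ((Equiv.Perm.sign σ : ℤ) : K) * ∏ i, w i ^ ((σ i : ℕ)) := by
  rw [← Matrix.det_vandermonde, Matrix.det_apply']
  rw [← Equiv.sum_comp (Equiv.inv (Equiv.Perm (Fin n)))]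
  apply Finset.sum_congr rfl
  intro σ _
  simp only [Equiv.inv_apply]
  rw [Equiv.Perm.sign_inv]
  congr 1
  rw [← Equiv.prod_comp σ (fun i => Matrix.vandermonde w (σ⁻¹ i) i)]
  apply Finset.prod_congr rfl
  intro i _
  simp [Matrix.vandermonde]

private lemma T_expand (n p : ℕ) [Fact p.Prime] (hp : p = 2 * n + 1) (s t : ℕ) (hs : s < n) (ht : t < n)
    (a : ZMod p) :
    ∑ x : ZMod p, x ^ (2 * s + 1) * (x + a) ^ (2 * t + 1) =
      if s + t + 1 = n then -1 else
      ∑ j ∈ Finset.range (2 * t + 2), (if 2 * s + 1 + j = 2 * n then -1 else 0) *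
        (a ^ (2 * t + 1 - j) * (2 * t + 1).choose j) := by
  have key : ∀ x : ZMod p, x ^ (2 * s + 1) * (x + a) ^ (2 * t + 1) =
      ∑ j ∈ Finset.range (2 * t + 2), x ^ (2 * s + 1 + j) * (a ^ (2 * t + 1 - j) * (2 * t + 1).choose j) := by
    intro x
    rw [add_pow, Finset.mul_sum]
    apply Finset.sum_congr rfl
    intro j hj
    rw [pow_add]; ring
  simp_rw [key]
  rw [Finset.sum_comm]
  have hsum : ∀ j ∈ Finset.range (2 * t + 2),
      (∑ x : ZMod p, x ^ (2 * s + 1 + j) * (a ^ (2 * t + 1 - j) * (2 * t + 1).choose j)) =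
      (if 2 * s + 1 + j = 2 * n then -1 else 0) * (a ^ (2 * t + 1 - j) * (2 * t + 1).choose j) := by
    intro j hj
    rw [← Finset.sum_mul]
    congr 1
    have hj' : j < 2 * t + 2 := Finset.mem_range.mp hj
    have := sum_pow_zmod p (2 * s + 1 + j) (by omega) (by omega)
    rw [this]
    congr 1
    simp only [eq_iff_iff]
    omega
  rw [Finset.sum_congr rfl hsum]
  split_ifs with h
  · -- s + t + 1 = n : only j = 2t+1 term survives
    rw [Finset.sum_eq_single (2 * t + 1)]
    · rw [if_pos (by omega), Nat.sub_self, pow_zero, Nat.choose_self, Nat.cast_one, mul_one, mul_one]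
    · intro j hj hne
      rw [if_neg (by have := Finset.mem_range.mp hj; omega), zero_mul]
    · intro h; exact absurd (Finset.mem_range.mpr (by omega)) h
  · rfl

private lemma T_lt (n p : ℕ) [Fact p.Prime] (hp : p = 2 * n + 1) (s t : ℕ) (hs : s < n) (ht : t < n)
    (hst : s + t + 1 < n) (a : ZMod p) :
    ∑ x : ZMod p, x ^ (2 * s + 1) * (x + a) ^ (2 * t + 1) = 0 := by
  rw [T_expand n p hp s t hs ht a, if_neg (by omega)]
  apply Finset.sum_eq_zero
  intro j hj
  rw [if_neg (by have := Finset.mem_range.mp hj; omega), zero_mul]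

lemma T_eq (n p : ℕ) [Fact p.Prime] (hp : p = 2 * n + 1) (s t : ℕ) (hs : s < n) (ht : t < n)
    (hst : s + t + 1 = n) (a : ZMod p) :
    ∑ x : ZMod p, x ^ (2 * s + 1) * (x + a) ^ (2 * t + 1) = -1 := by
  rw [T_expand n p hp s t hs ht a, if_pos hst]

lemma main_sum (n p : ℕ) [Fact p.Prime] (hp : p = 2 * n + 1) (a : Fin n → ZMod p) :
    ∑ x : Fin n → ZMod p, (∏ i, (x i * (x i + a i))) *
      ((∏ i, ∏ j ∈ Ioi i, ((x j) ^ 2 - (x i) ^ 2)) *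
       (∏ i, ∏ j ∈ Ioi i, ((x j + a j) ^ 2 - (x i + a i) ^ 2))) ≠ 0 := by
  have hn : 1 ≤ n := by
    by_contra h
    have : p = 1 := by omega
    exact Nat.Prime.one_lt (Fact.out) |>.ne' this
  -- notation
  have hcast : ∀ σ : Equiv.Perm (Fin n), ∀ i : Fin n, (σ i : ℕ) < n := fun σ i => (σ i).isLt
  -- Step 1: rewrite the summand
  have step1 : ∀ x : Fin n → ZMod p, (∏ i, (x i * (x i + a i))) *
      ((∏ i, ∏ j ∈ Ioi i, ((x j) ^ 2 - (x i) ^ 2)) *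
       (∏ i, ∏ j ∈ Ioi i, ((x j + a j) ^ 2 - (x i + a i) ^ 2))) =
      ∑ σ : Equiv.Perm (Fin n), ∑ τ : Equiv.Perm (Fin n),
        (((Equiv.Perm.sign σ : ℤ) : ZMod p) * ((Equiv.Perm.sign τ : ℤ) : ZMod p)) *
        ∏ i, (x i ^ (2 * (σ i : ℕ) + 1) * (x i + a i) ^ (2 * (τ i : ℕ) + 1)) := by
    intro x
    rw [vdm (fun i => (x i) ^ 2), vdm (fun i => (x i + a i) ^ 2)]
    rw [Finset.sum_mul_sum, Finset.mul_sum]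
    apply Finset.sum_congr rfl; intro σ _
    rw [Finset.mul_sum]
    apply Finset.sum_congr rfl; intro τ _
    have hprod : (∏ i, (x i ^ (2 * (σ i : ℕ) + 1) * (x i + a i) ^ (2 * (τ i : ℕ) + 1))) =
        (∏ i, (x i * (x i + a i))) * ((∏ i, ((x i ^ 2) ^ (σ i : ℕ))) * (∏ i, (((x i + a i) ^ 2) ^ (τ i : ℕ)))) := by
      rw [← Finset.prod_mul_distrib, ← Finset.prod_mul_distrib]
      apply Finset.prod_congr rfl; intro i _
      rw [← pow_mul, ← pow_mul]; ring
    rw [hprod]; ring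
  rw [Finset.sum_congr rfl fun x _ => step1 x]
  rw [Finset.sum_comm]
  have step2 : ∀ σ : Equiv.Perm (Fin n),
      (∑ x : Fin n → ZMod p, ∑ τ : Equiv.Perm (Fin n),
        (((Equiv.Perm.sign σ : ℤ) : ZMod p) * ((Equiv.Perm.sign τ : ℤ) : ZMod p)) *
        ∏ i, (x i ^ (2 * (σ i : ℕ) + 1) * (x i + a i) ^ (2 * (τ i : ℕ) + 1))) =
      ∑ τ : Equiv.Perm (Fin n),
        (((Equiv.Perm.sign σ : ℤ) : ZMod p) * ((Equiv.Perm.sign τ : ℤ) : ZMod p)) *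
        ∏ i, (∑ y : ZMod p, y ^ (2 * (σ i : ℕ) + 1) * (y + a i) ^ (2 * (τ i : ℕ) + 1)) := by
    intro σ
    rw [Finset.sum_comm]
    apply Finset.sum_congr rfl; intro τ _
    rw [← Finset.mul_sum]
    congr 1
    have := Finset.sum_prod_piFinset (Finset.univ : Finset (ZMod p))
      (fun (i : Fin n) (y : ZMod p) => y ^ (2 * (σ i : ℕ) + 1) * (y + a i) ^ (2 * (τ i : ℕ) + 1))
    rw [← this, Fintype.piFinset_univ]
  simp_rw [step2]
  -- Step 3: evaluate the double sum over permutations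
  have step3 : ∀ σ τ : Equiv.Perm (Fin n), (¬ ∀ i, (τ i) = Fin.rev (σ i)) →
      (∏ i, (∑ y : ZMod p, y ^ (2 * (σ i : ℕ) + 1) * (y + a i) ^ (2 * (τ i : ℕ) + 1))) = 0 := by
    intro σ τ hne
    have hex : ∃ i, (σ i : ℕ) + (τ i : ℕ) + 1 < n := by
      by_contra hc
      push_neg at hc
      apply hne
      have hgauss : (∑ i ∈ Finset.range n, i) * 2 = n * (n - 1) := Finset.sum_range_id_mul_two n
      have hsum : ∑ i, ((σ i : ℕ) + (τ i : ℕ)) = n * (n - 1) := by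
        rw [Finset.sum_add_distrib,
          Equiv.sum_comp σ (fun i : Fin n => (i : ℕ)), Equiv.sum_comp τ (fun i : Fin n => (i : ℕ)),
          Fin.sum_univ_eq_sum_range (fun i => i) n]
        omega
      have hconst : ∑ _i : Fin n, (n - 1) = n * (n - 1) := by
        rw [Finset.sum_const, Finset.card_univ, Fintype.card_fin, smul_eq_mul]
      have hle : ∀ i ∈ Finset.univ, (n - 1 : ℕ) ≤ (σ i : ℕ) + (τ i : ℕ) := by
        intro i _; have := hc i; omega
      have hall : ∀ i ∈ Finset.univ, (σ i : ℕ) + (τ i : ℕ) = n - 1 := by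
        intro i hi
        by_contra hgt
        have h1 : ∑ _i : Fin n, (n - 1) < ∑ i : Fin n, ((σ i : ℕ) + (τ i : ℕ)) :=
          Finset.sum_lt_sum hle ⟨i, hi, lt_of_le_of_ne (hle i hi) (Ne.symm hgt)⟩
        omega
      intro i
      have h := hall i (Finset.mem_univ i)
      have hτ : (τ i : ℕ) = n - 1 - (σ i : ℕ) := by have := hcast σ i; omega
      apply Fin.ext
      rw [hτ, Fin.val_rev]
      have := hcast σ i; omega
    obtain ⟨i, hi⟩ := hex
    apply Finset.prod_eq_zero (Finset.mem_univ i)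
    exact T_lt n p hp _ _ (hcast σ i) (hcast τ i) hi (a i)
  have step4 : ∀ σ : Equiv.Perm (Fin n),
      (∑ τ : Equiv.Perm (Fin n),
        (((Equiv.Perm.sign σ : ℤ) : ZMod p) * ((Equiv.Perm.sign τ : ℤ) : ZMod p)) *
        ∏ i, (∑ y : ZMod p, y ^ (2 * (σ i : ℕ) + 1) * (y + a i) ^ (2 * (τ i : ℕ) + 1))) =
      ((Equiv.Perm.sign (Fin.revPerm : Equiv.Perm (Fin n)) : ℤ) : ZMod p) * (-1) ^ n := by
    intro σ
    rw [Finset.sum_eq_single (σ.trans (Fin.revPerm : Equiv.Perm (Fin n)))]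
    · have hval : ∀ i : Fin n,
          (∑ y : ZMod p, y ^ (2 * (σ i : ℕ) + 1) *
            (y + a i) ^ (2 * ((σ.trans Fin.revPerm) i : ℕ) + 1)) = -1 := by
        intro i
        apply T_eq n p hp _ _ (hcast σ i) (hcast _ i)
        have h1 : ((σ.trans Fin.revPerm) i : ℕ) = n - ((σ i : ℕ) + 1) := by
          simp [Fin.val_rev]
        rw [h1]
        have := hcast σ i; omega
      rw [Finset.prod_congr rfl (fun i _ => hval i), Finset.prod_const, Finset.card_univ,
        Fintype.card_fin]
      congr 1
      have hsgn : Equiv.Perm.sign (σ.trans (Fin.revPerm : Equiv.Perm (Fin n))) =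
          Equiv.Perm.sign (Fin.revPerm : Equiv.Perm (Fin n)) * Equiv.Perm.sign σ := by
        have : σ.trans (Fin.revPerm : Equiv.Perm (Fin n)) =
            (Fin.revPerm : Equiv.Perm (Fin n)) * σ := rfl
        rw [this, map_mul]
      rw [hsgn]
      rcases Int.units_eq_one_or (Equiv.Perm.sign σ) with h | h <;>
        rcases Int.units_eq_one_or (Equiv.Perm.sign (Fin.revPerm : Equiv.Perm (Fin n))) with h2 | h2 <;>
        simp [h, h2]
    · intro τ _ hne
      rw [step3 σ τ, mul_zero]
      intro hall
      exact hne (Equiv.ext fun i => by rw [hall i]; rfl)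
    · intro h; exact absurd (Finset.mem_univ _) h
  rw [Finset.sum_congr rfl (fun σ _ => step4 σ), Finset.sum_const, Finset.card_univ,
    Fintype.card_perm, Fintype.card_fin, nsmul_eq_mul]
  have h1 : ((n.factorial : ℕ) : ZMod p) ≠ 0 := by
    rw [Ne, ZMod.natCast_eq_zero_iff]
    intro hdvd
    have := (Nat.Prime.dvd_factorial (Fact.out)).mp hdvd
    omega
  have h2 : ((Equiv.Perm.sign (Fin.revPerm : Equiv.Perm (Fin n)) : ℤ) : ZMod p) ≠ 0 := by
    rcases Int.units_eq_one_or (Equiv.Perm.sign (Fin.revPerm : Equiv.Perm (Fin n))) with h | h <;>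
      rw [h] <;> simp
  have h3 : ((-1 : ZMod p)) ^ n ≠ 0 := pow_ne_zero _ (neg_ne_zero.mpr one_ne_zero)
  exact mul_ne_zero h1 (mul_ne_zero h2 h3)

private lemma mem_O_aux (n p : ℕ) (hp : p = 2 * n + 1) (hprime : p.Prime) (y : Fin n → ZMod p)
    (h0 : ∀ i, y i ≠ 0) (hsq : ∀ i j, i ≠ j → y i ^ 2 ≠ y j ^ 2) :
    ∃ σ : Equiv.Perm (Fin n), ∃ ε : Fin n → ℤ,
      (∀ i, ε i = 1 ∨ ε i = -1) ∧
      ∀ i, y i = (ε i : ZMod p) * ((((σ i : ℕ) + 1 : ℕ) : ZMod p)) := by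
  haveI : Fact p.Prime := ⟨hprime⟩
  haveI : NeZero p := ⟨hprime.ne_zero⟩
  have claim : ∀ i : Fin n, ∃ k : Fin n, ∃ e : ℤ, (e = 1 ∨ e = -1) ∧
      y i = (e : ZMod p) * ((((k : ℕ) + 1 : ℕ) : ZMod p)) := by
    intro i
    obtain ⟨m, hy, hm0, hmp⟩ : ∃ m : ℕ, ((m : ℕ) : ZMod p) = y i ∧ m ≠ 0 ∧ m < p :=
      ⟨(y i).val, ZMod.natCast_zmod_val _, fun h => h0 i ((ZMod.val_eq_zero _).mp h),
        ZMod.val_lt _⟩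
    rcases le_or_gt m n with h | h
    · refine ⟨⟨m - 1, by omega⟩, 1, Or.inl rfl, ?_⟩
      rw [Int.cast_one, one_mul, show ((⟨m - 1, by omega⟩ : Fin n) : ℕ) = m - 1 from rfl,
        show m - 1 + 1 = m by omega, hy]
    · refine ⟨⟨2 * n - m, by omega⟩, -1, Or.inr rfl, ?_⟩
      have hadd : ((m + (2 * n + 1 - m) : ℕ) : ZMod p) = 0 := by
        rw [show m + (2 * n + 1 - m) = p by omega, ZMod.natCast_self]
      rw [Nat.cast_add] at hadd
      rw [show ((⟨2 * n - m, by omega⟩ : Fin n) : ℕ) = 2 * n - m from rfl,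
        show 2 * n - m + 1 = 2 * n + 1 - m by omega, ← hy]
      push_cast
      linear_combination hadd
  choose k e hsign hy using claim
  have sq : ∀ i, y i ^ 2 = ((((k i : ℕ) + 1 : ℕ) : ZMod p)) ^ 2 := by
    intro i
    rw [hy i, mul_pow]
    rcases hsign i with h | h <;> rw [h] <;> push_cast <;> ring
  have inj : Function.Injective k := by
    intro i j hij
    by_contra hne
    exact hsq i j hne (by rw [sq i, sq j, hij])
  exact ⟨Equiv.ofBijective k (Finite.injective_iff_bijective.mp inj), e, hsign, hy⟩


theorem stmt_13 (n p : ℕ) (hp : p = 2 * n + 1) (hprime : p.Prime)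
    (O : Set (Fin n → ZMod p))
    (hO : O = {x | ∃ σ : Equiv.Perm (Fin n), ∃ ε : Fin n → ℤ,
        (∀ i, ε i = 1 ∨ ε i = -1) ∧
        ∀ i, x i = (ε i : ZMod p) * ((((σ i : ℕ) + 1 : ℕ) : ZMod p))}) :
    ∀ a : Fin n → ZMod p, ∃ u ∈ O, ∃ v ∈ O, a = u - v := by
  intro a
  haveI : Fact p.Prime := ⟨hprime⟩
  have hsum := main_sum n p hp a
  obtain ⟨x, _, hx⟩ := Finset.exists_ne_zero_of_sum_ne_zero hsum
  rw [mul_ne_zero_iff] at hx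
  obtain ⟨hP, hD⟩ := hx
  rw [mul_ne_zero_iff] at hD
  obtain ⟨hD1, hD2⟩ := hD
  have hdist : ∀ w : Fin n → ZMod p,
      (∏ i, ∏ j ∈ Finset.Ioi i, ((w j) ^ 2 - (w i) ^ 2)) ≠ 0 →
      ∀ i j, i ≠ j → w i ^ 2 ≠ w j ^ 2 := by
    intro w hw i j hij heq
    have key : ∀ i' j' : Fin n, i' < j' → (w j') ^ 2 - (w i') ^ 2 ≠ 0 := by
      intro i' j' hlt
      have h1 := Finset.prod_ne_zero_iff.mp hw i' (Finset.mem_univ _)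
      exact Finset.prod_ne_zero_iff.mp h1 j' (Finset.mem_Ioi.mpr hlt)
    rcases lt_or_gt_of_ne hij with h | h
    · exact key i j h (by rw [heq]; ring)
    · exact key j i h (by rw [heq]; ring)
  have hPne : ∀ i, x i ≠ 0 ∧ x i + a i ≠ 0 := by
    intro i
    have := Finset.prod_ne_zero_iff.mp hP i (Finset.mem_univ _)
    exact mul_ne_zero_iff.mp this
  refine ⟨fun i => x i + a i, ?_, x, ?_, ?_⟩
  · rw [hO]
    exact mem_O_aux n p hp hprime _ (fun i => (hPne i).2) (hdist _ hD2)
  · rw [hO]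
    exact mem_O_aux n p hp hprime _ (fun i => (hPne i).1) (hdist _ hD1)
  · funext i; simp
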